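/- (Theorem 1, deterministic part.) Let N, N₁, N₂, K be positive integers with N₁ + N₂ = N + 1 and K ≤ min(N₁ − 1, N₂). Let z₁,…,z_K ∈ ℂ be pairwise distinct with |z_k| = 1, let s₁,…,s_K ∈ ℂ be all nonzero, and let y ∈ ℂ^N with y_j = Σ_{k=1}^K s_k · z_k^{j−1}. Then the double Hankel matrix D(y) = [H(y) | J_{N₁}·conj(H(y))·J_{N₂}] has rank exactly K, and its column space equals the column space of the Vandermonde matrix A_{N₁}(z). -/

import Mathlib

open Matrix

/-- The `N₁ × N₂` Hankel matrix of a signal `y ∈ ℂ^N`, where `N₁ + N₂ = N + 1`. -/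
noncomputable def hankelM {N : ℕ} (N₁ N₂ : ℕ) (h : N₁ + N₂ = N + 1) (y : Fin N → ℂ) :
    Matrix (Fin N₁) (Fin N₂) ℂ :=
  fun j l => y ⟨j.1 + l.1, by have := j.2; have := l.2; omega⟩

/-- The `m × K` Vandermonde matrix with nodes `z`. -/
noncomputable def vandM (m : ℕ) {K : ℕ} (z : Fin K → ℂ) : Matrix (Fin m) (Fin K) ℂ :=
  fun n k => z k ^ (n : ℕ)

/-- The `m × m` reversal matrix `J_m`, with ones on the anti-diagonal. -/
noncomputable def revM (m : ℕ) : Matrix (Fin m) (Fin m) ℂ :=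
  fun i j => if i.1 + j.1 + 1 = m then 1 else 0

/-- The double Hankel matrix `D(y) = [H(y) | J_{N₁} ⬝ conj(H(y)) ⬝ J_{N₂}]`. -/
noncomputable def dHankel {N : ℕ} (N₁ N₂ : ℕ) (h : N₁ + N₂ = N + 1) (y : Fin N → ℂ) :
    Matrix (Fin N₁) (Fin N₂ ⊕ Fin N₂) ℂ :=
  Matrix.fromCols (hankelM N₁ N₂ h y)
    (revM N₁ * (hankelM N₁ N₂ h y).map (starRingEnd ℂ) * revM N₂)

lemma vand_inj {K m : ℕ} (hKm : K ≤ m) (z : Fin K → ℂ) (hz : Function.Injective z) :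
    Function.Injective (vandM m z).mulVecLin := by
  rw [← LinearMap.ker_eq_bot, LinearMap.ker_eq_bot']
  intro x hx
  have hx' : vandM m z *ᵥ x = 0 := hx
  have hsq : (Matrix.vandermonde z)ᵀ *ᵥ x = 0 := by
    ext i
    have := congrFun hx' ⟨i.1, lt_of_lt_of_le i.2 hKm⟩
    simpa [Matrix.mulVec, Matrix.vandermonde, vandM, dotProduct] using this
  have hdet : (Matrix.vandermonde z)ᵀ.det ≠ 0 := by
    rw [Matrix.det_transpose]
    exact Matrix.det_vandermonde_ne_zero_iff.2 hz
  have := congrArg (fun v => ((Matrix.vandermonde z)ᵀ)⁻¹ *ᵥ v) hsq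
  simpa [Matrix.mulVec_mulVec, Matrix.nonsing_inv_mul _ (Ne.isUnit hdet)] using this

lemma vand_rank {K m : ℕ} (hKm : K ≤ m) (z : Fin K → ℂ) (hz : Function.Injective z) :
    (vandM m z).rank = K := by
  rw [Matrix.rank, LinearMap.finrank_range_of_inj (vand_inj hKm z hz)]
  simp [Module.finrank_fintype_fun_eq_card]

lemma vandT_surj {K m : ℕ} (hKm : K ≤ m) (z : Fin K → ℂ) (hz : Function.Injective z) :
    Function.Surjective (vandM m z)ᵀ.mulVecLin := by
  rw [← LinearMap.range_eq_top]
  apply Submodule.eq_top_of_finrank_eq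
  have : ((vandM m z)ᵀ).rank = K := by rw [Matrix.rank_transpose]; exact vand_rank hKm z hz
  rw [← Matrix.rank, this, Module.finrank_fintype_fun_eq_card, Fintype.card_fin]

lemma revM_mul {m n : ℕ} (X : Matrix (Fin m) (Fin n) ℂ) (i : Fin m) (j : Fin n) (hm : 0 < m) :
    (revM m * X) i j = X ⟨m - 1 - i.1, by omega⟩ j := by
  rw [Matrix.mul_apply]
  rw [Finset.sum_eq_single (⟨m - 1 - i.1, by omega⟩ : Fin m)]
  · simp [revM]; intro hc; exfalso; have := i.2; omega
  · intro b _ hb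
    have : ¬ (i.1 + b.1 + 1 = m) := by
      intro hc; apply hb; apply Fin.ext; simp; omega
    simp [revM, this]
  · simp

lemma mul_revM {m n : ℕ} (X : Matrix (Fin m) (Fin n) ℂ) (i : Fin m) (j : Fin n) (hn : 0 < n) :
    (X * revM n) i j = X i ⟨n - 1 - j.1, by omega⟩ := by
  rw [Matrix.mul_apply]
  rw [Finset.sum_eq_single (⟨n - 1 - j.1, by omega⟩ : Fin n)]
  · simp [revM]; intro hc; exfalso; have := j.2; omega
  · intro b _ hb
    have : ¬ (b.1 + j.1 + 1 = n) := by
      intro hc; apply hb; apply Fin.ext; simp; omega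
    simp [revM, this]
  · simp

noncomputable def bMat {K : ℕ} (N₂ N : ℕ) (z s : Fin K → ℂ) :
    Matrix (Fin K) (Fin N₂ ⊕ Fin N₂) ℂ :=
  fun k q => Sum.elim (fun l : Fin N₂ => s k * z k ^ l.1)
    (fun l : Fin N₂ =>
      (starRingEnd ℂ) (s k) * (starRingEnd ℂ) (z k) ^ (N - 1) * z k ^ l.1) q

theorem statement10 (N N₁ N₂ K : ℕ) (hN : 0 < N) (hN₁ : 0 < N₁) (hN₂ : 0 < N₂) (hK : 0 < K)
    (h : N₁ + N₂ = N + 1) (hK1 : K ≤ N₁ - 1) (hK2 : K ≤ N₂)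
    (z : Fin K → ℂ) (hz : Function.Injective z) (hzu : ∀ k, ‖z k‖ = 1)
    (s : Fin K → ℂ) (hs : ∀ k, s k ≠ 0)
    (y : Fin N → ℂ) (hy : ∀ j : Fin N, y j = ∑ k, s k * z k ^ (j : ℕ)) :
    (dHankel N₁ N₂ h y).rank = K ∧
      LinearMap.range (dHankel N₁ N₂ h y).mulVecLin =
        LinearMap.range (vandM N₁ z).mulVecLin := by
  have hone : ∀ k, (starRingEnd ℂ) (z k) * z k = 1 := by
    intro k
    have h1 := Complex.mul_conj (z k)
    rw [mul_comm] at h1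
    rw [h1, Complex.normSq_eq_norm_sq, hzu k]
    norm_num
  -- factorization
  have hfact : dHankel N₁ N₂ h y = vandM N₁ z * bMat N₂ N z s := by
    ext j q
    rcases q with l | l
    · simp only [dHankel, Matrix.fromCols, Matrix.of_apply, Sum.elim_inl, Matrix.mul_apply,
        hankelM, bMat, vandM]
      rw [hy]
      apply Finset.sum_congr rfl
      intro k _
      simp only []
      rw [pow_add]; ring
    · simp only [dHankel, Matrix.fromCols, Matrix.of_apply, Sum.elim_inr]
      rw [mul_revM _ _ _ hN₂, revM_mul _ _ _ hN₁]
      simp only [Matrix.map_apply, hankelM]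
      rw [hy, map_sum]
      rw [Matrix.mul_apply]
      apply Finset.sum_congr rfl
      intro k _
      simp only [bMat, vandM, Sum.elim_inr]
      have hj := j.2; have hl := l.2
      have hexp : (N₁ - 1 - j.1) + (N₂ - 1 - l.1) = N - 1 - j.1 - l.1 := by omega
      rw [hexp, _root_.map_mul, map_pow]
      have key : (starRingEnd ℂ) (z k) ^ (N - 1) * z k ^ (j.1 + l.1)
          = (starRingEnd ℂ) (z k) ^ (N - 1 - j.1 - l.1) := by
        have hle : (N - 1 - j.1 - l.1) + (j.1 + l.1) = N - 1 := by omega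
        calc (starRingEnd ℂ) (z k) ^ (N - 1) * z k ^ (j.1 + l.1)
            = (starRingEnd ℂ) (z k) ^ ((N - 1 - j.1 - l.1) + (j.1 + l.1)) * z k ^ (j.1 + l.1) := by
              rw [hle]
          _ = (starRingEnd ℂ) (z k) ^ (N - 1 - j.1 - l.1) *
              ((starRingEnd ℂ) (z k) * z k) ^ (j.1 + l.1) := by
              rw [pow_add, mul_pow]; ring
          _ = _ := by rw [hone k, one_pow, mul_one]
      calc (starRingEnd ℂ) (s k) * (starRingEnd ℂ) (z k) ^ (N - 1 - j.1 - l.1)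
          = (starRingEnd ℂ) (s k) * ((starRingEnd ℂ) (z k) ^ (N - 1) * z k ^ (j.1 + l.1)) := by
            rw [key]
        _ = z k ^ j.1 * ((starRingEnd ℂ) (s k) * (starRingEnd ℂ) (z k) ^ (N - 1) * z k ^ l.1) := by
            rw [pow_add]; ring
  -- surjectivity of B
  have hBsurj : Function.Surjective (bMat N₂ N z s).mulVecLin := by
    intro u
    obtain ⟨v, hv⟩ := vandT_surj hK2 z hz (fun k => u k / s k)
    refine ⟨Sum.elim v 0, ?_⟩
    ext k
    have hvk := congrFun hv k
    simp only [Matrix.mulVecLin_apply, Matrix.mulVec, dotProduct,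
      Matrix.transpose_apply, vandM] at hvk ⊢
    rw [Fintype.sum_sum_type]
    simp only [bMat, Sum.elim_inl, Sum.elim_inr, Pi.zero_apply, mul_zero, Finset.sum_const_zero,
      add_zero]
    simp_rw [mul_assoc, ← Finset.mul_sum, hvk, mul_div_cancel₀ _ (hs k)]
  have hrange : LinearMap.range (dHankel N₁ N₂ h y).mulVecLin
      = LinearMap.range (vandM N₁ z).mulVecLin := by
    rw [hfact, Matrix.mulVecLin_mul]
    exact LinearMap.range_comp_of_range_eq_top _ (LinearMap.range_eq_top.2 hBsurj)
  refine ⟨?_, hrange⟩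
  rw [Matrix.rank, hrange, ← Matrix.rank, vand_rank (by omega) z hz]
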